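/- Let graphs G₁ and G₂ with distinguished vertices s,t be combined in parallel (identifying the two s vertices and the two t vertices). Then s and t are connected in the combined graph if and only if s and t are connected in G₁ or in G₂. -/

import Mathlib

/-- The disjoint union of two graphs, on the sum of their vertex types. -/
def disjUnion {V₁ V₂ : Type*} (G₁ : SimpleGraph V₁) (G₂ : SimpleGraph V₂) :
    SimpleGraph (V₁ ⊕ V₂) where
  Adj a b :=
    match a, b with
    | Sum.inl x, Sum.inl y => G₁.Adj x y
    | Sum.inr x, Sum.inr y => G₂.Adj x y
    | _, _ => False
  symm := by
    constructor
    rintro (x | x) (y | y) h <;> simp_all <;> exact h.symm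
  loopless := by
    constructor
    rintro (x | x) h <;> simp_all

/-- The graph obtained from gluing the disjoint union of `G₁` and `G₂` along the
identifications given by the relation `r` on vertices: the image of the disjoint union
under the quotient map `Quot.mk r`. -/
def glueGraph {V₁ V₂ : Type*} (G₁ : SimpleGraph V₁) (G₂ : SimpleGraph V₂)
    (r : V₁ ⊕ V₂ → V₁ ⊕ V₂ → Prop) : SimpleGraph (Quot r) :=
  SimpleGraph.fromRel (fun x y =>
    ∃ a b : V₁ ⊕ V₂, (disjUnion G₁ G₂).Adj a b ∧ x = Quot.mk r a ∧ y = Quot.mk r b)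

/-- The identifications for the parallel combination: `s₁` with `s₂` and `t₁` with `t₂`. -/
def parallelRel {V₁ V₂ : Type*} (s₁ t₁ : V₁) (s₂ t₂ : V₂) :
    V₁ ⊕ V₂ → V₁ ⊕ V₂ → Prop := fun a b =>
  (a = Sum.inl s₁ ∧ b = Sum.inr s₂) ∨ (a = Sum.inl t₁ ∧ b = Sum.inr t₂)

section Aux

variable {V₁ V₂ : Type*} (G₁ : SimpleGraph V₁) (G₂ : SimpleGraph V₂)
  (s₁ t₁ : V₁) (s₂ t₂ : V₂)

/-- Invariant carried along walks in the glued graph. -/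
def parA : V₁ ⊕ V₂ → Prop
  | Sum.inl x => G₁.Reachable s₁ x ∨ (G₂.Reachable s₂ t₂ ∧ G₁.Reachable t₁ x)
  | Sum.inr y => G₂.Reachable s₂ y ∨ (G₁.Reachable s₁ t₁ ∧ G₂.Reachable t₂ y)

lemma parA_sound : ∀ a b, parallelRel s₁ t₁ s₂ t₂ a b →
    parA G₁ G₂ s₁ t₁ s₂ t₂ a = parA G₁ G₂ s₁ t₁ s₂ t₂ b := by
  rintro a b (⟨rfl, rfl⟩ | ⟨rfl, rfl⟩)
  · exact propext (iff_of_true (Or.inl (SimpleGraph.Reachable.refl _))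
      (Or.inl (SimpleGraph.Reachable.refl _)))
  · refine propext ⟨?_, ?_⟩
    · rintro (h | ⟨h, -⟩)
      · exact Or.inr ⟨h, SimpleGraph.Reachable.refl _⟩
      · exact Or.inl h
    · rintro (h | ⟨h, -⟩)
      · exact Or.inr ⟨h, SimpleGraph.Reachable.refl _⟩
      · exact Or.inl h

lemma parA_step {a b : V₁ ⊕ V₂} (h : (disjUnion G₁ G₂).Adj a b)
    (ha : parA G₁ G₂ s₁ t₁ s₂ t₂ a) : parA G₁ G₂ s₁ t₁ s₂ t₂ b := by
  rcases a with x | x <;> rcases b with y | y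
  · have h' : G₁.Adj x y := h
    rcases ha with h1 | ⟨h2, h1⟩
    · exact Or.inl (h1.trans h'.reachable)
    · exact Or.inr ⟨h2, h1.trans h'.reachable⟩
  · exact absurd h (by simp [disjUnion])
  · exact absurd h (by simp [disjUnion])
  · have h' : G₂.Adj x y := h
    rcases ha with h1 | ⟨h2, h1⟩
    · exact Or.inl (h1.trans h'.reachable)
    · exact Or.inr ⟨h2, h1.trans h'.reachable⟩

end Aux

/-- Parallel combination: identifying the two `s` vertices and the two `t` vertices of
`G₁` and `G₂`, the combined graph connects `s` to `t` iff `s₁, t₁` are connected in `G₁`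
or `s₂, t₂` are connected in `G₂`. -/
theorem parallel_reachable_iff {V₁ V₂ : Type*} (G₁ : SimpleGraph V₁) (G₂ : SimpleGraph V₂)
    (s₁ t₁ : V₁) (s₂ t₂ : V₂) :
    (glueGraph G₁ G₂ (parallelRel s₁ t₁ s₂ t₂)).Reachable
        (Quot.mk _ (Sum.inl s₁)) (Quot.mk _ (Sum.inl t₁)) ↔
      G₁.Reachable s₁ t₁ ∨ G₂.Reachable s₂ t₂ := by
  set r := parallelRel s₁ t₁ s₂ t₂ with hr
  set H := glueGraph G₁ G₂ r with hH
  set P : Quot r → Prop := Quot.lift (parA G₁ G₂ s₁ t₁ s₂ t₂)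
    (parA_sound G₁ G₂ s₁ t₁ s₂ t₂) with hP
  constructor
  · intro h
    obtain ⟨w⟩ := h
    have key : ∀ {u v : Quot r} (_ : H.Walk u v), P u → P v := by
      intro u v w
      induction w with
      | nil => exact id
      | cons hadj _ ih =>
        refine fun hp => ih ?_
        obtain ⟨hne, ⟨a, b, hab, hqa, hqb⟩ | ⟨a, b, hab, hqa, hqb⟩⟩ := hadj
        · subst hqa hqb
          exact parA_step G₁ G₂ s₁ t₁ s₂ t₂ hab hp
        · subst hqa hqb
          exact parA_step G₁ G₂ s₁ t₁ s₂ t₂ hab.symm hp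
    have hstart : P (Quot.mk r (Sum.inl s₁)) :=
      Or.inl (SimpleGraph.Reachable.refl _)
    have hend : G₁.Reachable s₁ t₁ ∨ (G₂.Reachable s₂ t₂ ∧ G₁.Reachable t₁ t₁) :=
      key w hstart
    rcases hend with h | ⟨h, -⟩
    · exact Or.inl h
    · exact Or.inr h
  · have stepL : ∀ {x y : V₁}, G₁.Adj x y →
        H.Reachable (Quot.mk r (Sum.inl x)) (Quot.mk r (Sum.inl y)) := by
      intro x y hxy
      by_cases heq : (Quot.mk r (Sum.inl x) : Quot r) = Quot.mk r (Sum.inl y)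
      · rw [heq]
      · exact SimpleGraph.Adj.reachable
          ⟨heq, Or.inl ⟨Sum.inl x, Sum.inl y, hxy, rfl, rfl⟩⟩
    have stepR : ∀ {x y : V₂}, G₂.Adj x y →
        H.Reachable (Quot.mk r (Sum.inr x)) (Quot.mk r (Sum.inr y)) := by
      intro x y hxy
      by_cases heq : (Quot.mk r (Sum.inr x) : Quot r) = Quot.mk r (Sum.inr y)
      · rw [heq]
      · exact SimpleGraph.Adj.reachable
          ⟨heq, Or.inl ⟨Sum.inr x, Sum.inr y, hxy, rfl, rfl⟩⟩
    have mapL : ∀ {x y : V₁}, G₁.Reachable x y →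
        H.Reachable (Quot.mk r (Sum.inl x)) (Quot.mk r (Sum.inl y)) := by
      intro x y hxy
      obtain ⟨w⟩ := hxy
      induction w with
      | nil => exact SimpleGraph.Reachable.refl _
      | cons hadj _ ih => exact (stepL hadj).trans ih
    have mapR : ∀ {x y : V₂}, G₂.Reachable x y →
        H.Reachable (Quot.mk r (Sum.inr x)) (Quot.mk r (Sum.inr y)) := by
      intro x y hxy
      obtain ⟨w⟩ := hxy
      induction w with
      | nil => exact SimpleGraph.Reachable.refl _
      | cons hadj _ ih => exact (stepR hadj).trans ih
    have hs : (Quot.mk r (Sum.inl s₁) : Quot r) = Quot.mk r (Sum.inr s₂) :=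
      Quot.sound (Or.inl ⟨rfl, rfl⟩)
    have ht : (Quot.mk r (Sum.inl t₁) : Quot r) = Quot.mk r (Sum.inr t₂) :=
      Quot.sound (Or.inr ⟨rfl, rfl⟩)
    rintro (h | h)
    · exact mapL h
    · rw [hs, ht]
      exact mapR h
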